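/- If B is exponentially distributed with rate λ > 0, then for every integer l, the probability that the binary digit of B at position l equals 1, i.e. Pr{⌊B/2^l⌋ is odd}, equals 1/(1 + e^{λ 2^l}). -/

import Mathlib

open MeasureTheory ProbabilityTheory Real

lemma expMeasure_Ico_aux {r a b : ℝ} (hr : 0 < r) (ha : 0 ≤ a) (hab : a ≤ b) :
    expMeasure r (Set.Ico a b) = ENNReal.ofReal (rexp (-(r*a)) - rexp (-(r*b))) := by
  rw [expMeasure, gammaMeasure, withDensity_apply _ measurableSet_Ico]
  have h1 : ∀ x ∈ Set.Ico a b, gammaPDF 1 r x = ENNReal.ofReal (r * rexp (-(r*x))) := by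
    intro x hx
    rw [show gammaPDF 1 r x = exponentialPDF r x from rfl,
      exponentialPDF_of_nonneg (ha.trans hx.1)]
  rw [setLIntegral_congr_fun measurableSet_Ico h1]
  have hcont : Continuous fun x => r * rexp (-(r*x)) := by continuity
  rw [← ofReal_integral_eq_lintegral_ofReal
      ((hcont.integrableOn_Icc (a := a) (b := b)).mono_set Set.Ico_subset_Icc_self)
      (ae_of_all _ fun x => by positivity)]
  congr 1
  rw [integral_Ico_eq_integral_Ioo, ← integral_Ioc_eq_integral_Ioo,
    ← intervalIntegral.integral_of_le hab]
  rw [intervalIntegral.integral_eq_sub_of_hasDerivAt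
      (fun x _ => hasDerivAt_neg_exp_mul_exp) (hcont.intervalIntegrable a b)]
  ring

lemma expMeasure_Iio_zero_aux {r : ℝ} : expMeasure r (Set.Iio 0) = 0 := by
  rw [expMeasure, gammaMeasure, withDensity_apply _ measurableSet_Iio]
  exact lintegral_exponentialPDF_of_nonpos le_rfl

theorem exponential_binary_digit_prob
    {Ω : Type*} [MeasurableSpace Ω] (P : Measure Ω) [IsProbabilityMeasure P]
    (lam : ℝ) (hlam : 0 < lam) (B : Ω → ℝ) (hB : Measurable B)
    (hdist : P.map B = ProbabilityTheory.expMeasure lam) (l : ℤ) :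
    P {ω | Odd ⌊B ω / 2 ^ l⌋} =
      ENNReal.ofReal (1 / (1 + Real.exp (lam * 2 ^ l))) := by
  set c : ℝ := 2 ^ l with hc
  have hcpos : 0 < c := zpow_pos (by norm_num) l
  set S : Set ℝ := {x | Odd ⌊x / c⌋} with hS
  have hSm : MeasurableSet S :=
    (Int.measurable_floor.comp (measurable_id.div_const c)) (MeasurableSet.of_discrete
      (s := {n : ℤ | Odd n}))
  have key : P {ω | Odd ⌊B ω / 2 ^ l⌋} = expMeasure lam S := by
    rw [← hdist, Measure.map_apply hB hSm]; rfl
  rw [key]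
  -- restrict to nonnegatives
  have hzero : expMeasure lam (S \ Set.Ici 0) = 0 :=
    measure_mono_null (fun x hx => by simpa using lt_of_not_ge hx.2) expMeasure_Iio_zero_aux
  have hsplit : expMeasure lam S = expMeasure lam (S ∩ Set.Ici 0) := by
    rw [← measure_inter_add_diff S measurableSet_Ici, hzero, add_zero]
  -- the set as a union of intervals
  have hunion : S ∩ Set.Ici 0 = ⋃ k : ℕ, Set.Ico (c * (2*k+1)) (c * (2*k+2)) := by
    ext x
    simp only [hS, Set.mem_inter_iff, Set.mem_setOf_eq, Set.mem_Ici, Set.mem_iUnion,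
      Set.mem_Ico]
    constructor
    · rintro ⟨⟨m, hm⟩, hx⟩
      have hm' : ⌊x / c⌋ = 2 * m + 1 := by omega
      have h0 : (0:ℤ) ≤ 2 * m + 1 := hm' ▸ Int.floor_nonneg.mpr (div_nonneg hx hcpos.le)
      have hm0 : 0 ≤ m := by omega
      obtain ⟨k, rfl⟩ := Int.eq_ofNat_of_zero_le hm0
      have hb := Int.floor_eq_iff.mp hm'
      refine ⟨k, ?_, ?_⟩
      · have := (le_div_iff₀ hcpos).mp (by exact_mod_cast hb.1)
        push_cast at this ⊢; linarith
      · have := (div_lt_iff₀ hcpos).mp (by exact_mod_cast hb.2)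
        push_cast at this ⊢; linarith
    · rintro ⟨k, h1, h2⟩
      have hx0 : 0 ≤ x := le_trans (by positivity) h1
      have hfl : ⌊x / c⌋ = 2 * (k:ℤ) + 1 := by
        rw [Int.floor_eq_iff]
        constructor
        · rw [le_div_iff₀ hcpos]; push_cast; linarith
        · rw [div_lt_iff₀ hcpos]; push_cast; linarith
      exact ⟨⟨k, by omega⟩, hx0⟩
  rw [hsplit, hunion]
  have hkey : ∀ a b : ℕ, a < b → c*(2*(a:ℝ)+2) ≤ c*(2*(b:ℝ)+1) := by
    intro a b hab
    have h1 : (a:ℝ)+1 ≤ b := by exact_mod_cast hab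
    nlinarith [hcpos.le]
  have hdisj : Pairwise (Function.onFun Disjoint
      fun k : ℕ => Set.Ico (c * (2*k+1)) (c * (2*k+2))) := by
    intro i j hij
    rw [Function.onFun, Set.Ico_disjoint_Ico]
    rcases lt_or_gt_of_ne hij with h | h
    · exact le_trans (min_le_left _ _) (le_trans (hkey i j h) (le_max_right _ _))
    · exact le_trans (min_le_right _ _) (le_trans (hkey j i h) (le_max_left _ _))
  rw [measure_iUnion hdisj (fun k => measurableSet_Ico)]
  set q : ℝ := rexp (-(lam*c)) with hq
  have hq0 : 0 < q := exp_pos _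
  have hq1 : q < 1 := by
    rw [hq, ← Real.exp_zero]
    exact Real.exp_lt_exp.mpr (by nlinarith)
  have hterm : ∀ k : ℕ, expMeasure lam (Set.Ico (c*(2*(k:ℝ)+1)) (c*(2*(k:ℝ)+2)))
      = ENNReal.ofReal ((q^2)^k * (q - q^2)) := by
    intro k
    rw [expMeasure_Ico_aux hlam (by positivity) (by nlinarith)]
    congr 1
    rw [hq, ← Real.exp_nat_mul, ← Real.exp_nat_mul, mul_sub,
      ← Real.exp_add, ← Real.exp_add]
    congr 2 <;> push_cast <;> ring
  rw [tsum_congr hterm]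
  have hnn : ∀ k : ℕ, 0 ≤ (q^2)^k * (q - q^2) :=
    fun k => mul_nonneg (by positivity) (by nlinarith)
  have hsumm : Summable fun k : ℕ => (q^2)^k * (q - q^2) :=
    (summable_geometric_of_lt_one (by positivity) (by nlinarith)).mul_right _
  rw [← ENNReal.ofReal_tsum_of_nonneg hnn hsumm]
  congr 1
  rw [tsum_mul_right, tsum_geometric_of_lt_one (by positivity) (by nlinarith)]
  have hE : rexp (lam * c) = q⁻¹ := by rw [hq, Real.exp_neg, inv_inv]
  rw [hE]
  have h2 : 1 - q^2 ≠ 0 := by nlinarith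
  field_simp
  ring
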